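/- arXiv:0908.0207 — 3 statements merged into one kernel-verified Lean document; each statement's English description precedes it below -/
import Mathlib

section
/- Let γ : ℝ → ℝ be continuous. Define γ̄ : ℝ² → ℝ² by γ̄(x) = (1/(2π)) ∫₀^{2π} (-sin φ, cos φ) · γ(⟨(-sin φ, cos φ), x⟩) dφ, where ⟨·,·⟩ is the Euclidean inner product. Then for every nonzero x ∈ ℝ², γ̄(x) = ρ(|x|) · x/|x|, where ρ(r) = (1/(2π)) ∫₀^{2π} γ(r·sin φ)·sin φ dφ. -/
open Real

noncomputable def vec2 (a b : ℝ) : EuclideanSpace ℝ (Fin 2) := WithLp.toLp 2 ![a, b]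

/-- The averaged gain. -/
noncomputable def rho (γ : ℝ → ℝ) (r : ℝ) : ℝ :=
  (1 / (2 * π)) * ∫ φ in (0:ℝ)..(2 * π), γ (r * Real.sin φ) * Real.sin φ

/-- The averaged coupling function. -/
noncomputable def gbar (γ : ℝ → ℝ) (x : EuclideanSpace ℝ (Fin 2)) : EuclideanSpace ℝ (Fin 2) :=
  (1 / (2 * π)) • ∫ φ in (0:ℝ)..(2 * π),
    γ (inner ℝ (vec2 (-Real.sin φ) (Real.cos φ)) x : ℝ) • vec2 (-Real.sin φ) (Real.cos φ)

lemma zero_int (γ : ℝ → ℝ) (hγ : Continuous γ) (r : ℝ) :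
    ∫ φ in (0:ℝ)..(2*π), γ (r * Real.sin φ) * Real.cos φ = 0 := by
  rcases eq_or_ne r 0 with h | h
  · simp [h, integral_cos]
  · have key := intervalIntegral.integral_comp_smul_deriv
      (f := fun φ => r * Real.sin φ) (f' := fun φ => r * Real.cos φ)
      (g := γ) (a := (0:ℝ)) (b := 2*π)
      (fun x _ => (Real.hasDerivAt_sin x).const_mul r)
      (by fun_prop) hγ
    simp only [Real.sin_zero, mul_zero, Real.sin_two_pi,
      intervalIntegral.integral_same, smul_eq_mul, Function.comp] at key
    have h2 : ∫ φ in (0:ℝ)..(2*π), r * (γ (r * Real.sin φ) * Real.cos φ) = 0 := by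
      rw [← key]; congr 1; funext φ; ring
    rw [intervalIntegral.integral_const_mul] at h2
    exact (mul_eq_zero.mp h2).resolve_left h

lemma shift_int (γ : ℝ → ℝ) (r θ : ℝ) (g : ℝ → ℝ)
    (hgp : Function.Periodic g (2*π)) :
    (∫ φ in (0:ℝ)..(2*π), γ (r * Real.sin (θ - φ)) * g φ)
      = ∫ ψ in (0:ℝ)..(2*π), γ (r * Real.sin ψ) * g (θ - ψ) := by
  have h2 := intervalIntegral.integral_comp_sub_left (a := (0:ℝ)) (b := 2*π)
    (fun ψ => γ (r * Real.sin ψ) * g (θ - ψ)) θ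
  have h1 : (∫ φ in (0:ℝ)..(2*π), γ (r * Real.sin (θ - φ)) * g φ)
      = ∫ φ in (0:ℝ)..(2*π), (fun ψ => γ (r * Real.sin ψ) * g (θ - ψ)) (θ - φ) := by
    congr 1; funext φ; simp
  rw [h1, h2]
  have hper : Function.Periodic (fun ψ => γ (r * Real.sin ψ) * g (θ - ψ)) (2*π) := by
    intro ψ
    have h3 : θ - (ψ + 2*π) = (θ - ψ) - 2*π := by ring
    simp [Real.sin_add_two_pi, h3, hgp.sub_eq (θ - ψ)]
  have := hper.intervalIntegral_add_eq (θ - 2*π) 0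
  simpa [sub_add_cancel, sub_zero] using this

lemma int_sin_cos (γ : ℝ → ℝ) (hγ : Continuous γ) (r θ : ℝ) :
    (∫ φ in (0:ℝ)..(2*π), γ (r * Real.sin (θ - φ)) * (-Real.sin φ))
      = Real.cos θ * ∫ ψ in (0:ℝ)..(2*π), γ (r * Real.sin ψ) * Real.sin ψ ∧
    (∫ φ in (0:ℝ)..(2*π), γ (r * Real.sin (θ - φ)) * Real.cos φ)
      = Real.sin θ * ∫ ψ in (0:ℝ)..(2*π), γ (r * Real.sin ψ) * Real.sin ψ := by
  have hiS : IntervalIntegrable (fun ψ => γ (r * Real.sin ψ) * Real.sin ψ)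
      MeasureTheory.volume 0 (2*π) := (by fun_prop : Continuous _).intervalIntegrable _ _
  have hiC : IntervalIntegrable (fun ψ => γ (r * Real.sin ψ) * Real.cos ψ)
      MeasureTheory.volume 0 (2*π) := (by fun_prop : Continuous _).intervalIntegrable _ _
  have hz := zero_int γ hγ r
  constructor
  · have hp : Function.Periodic (fun φ => -Real.sin φ) (2*π) := by
      intro t; simp [Real.sin_add_two_pi]
    have := shift_int γ r θ _ hp
    rw [this]
    have hsplit : ∀ ψ : ℝ, γ (r * Real.sin ψ) * (-Real.sin (θ - ψ))
        = Real.cos θ * (γ (r * Real.sin ψ) * Real.sin ψ)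
          - Real.sin θ * (γ (r * Real.sin ψ) * Real.cos ψ) := by
      intro ψ; rw [Real.sin_sub]; ring
    calc (∫ ψ in (0:ℝ)..(2*π), γ (r * Real.sin ψ) * (-Real.sin (θ - ψ)))
        = ∫ ψ in (0:ℝ)..(2*π), (Real.cos θ * (γ (r * Real.sin ψ) * Real.sin ψ)
            - Real.sin θ * (γ (r * Real.sin ψ) * Real.cos ψ)) := by
          congr 1; funext ψ; exact hsplit ψ
      _ = Real.cos θ * (∫ ψ in (0:ℝ)..(2*π), γ (r * Real.sin ψ) * Real.sin ψ)
            - Real.sin θ * ∫ ψ in (0:ℝ)..(2*π), γ (r * Real.sin ψ) * Real.cos ψ := by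
          rw [intervalIntegral.integral_sub (hiS.const_mul _) (hiC.const_mul _),
            intervalIntegral.integral_const_mul, intervalIntegral.integral_const_mul]
      _ = _ := by rw [hz]; ring
  · have hp : Function.Periodic Real.cos (2*π) := Real.cos_periodic
    have := shift_int γ r θ _ hp
    rw [this]
    have hsplit : ∀ ψ : ℝ, γ (r * Real.sin ψ) * Real.cos (θ - ψ)
        = Real.sin θ * (γ (r * Real.sin ψ) * Real.sin ψ)
          + Real.cos θ * (γ (r * Real.sin ψ) * Real.cos ψ) := by
      intro ψ; rw [Real.cos_sub]; ring
    calc (∫ ψ in (0:ℝ)..(2*π), γ (r * Real.sin ψ) * Real.cos (θ - ψ))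
        = ∫ ψ in (0:ℝ)..(2*π), (Real.sin θ * (γ (r * Real.sin ψ) * Real.sin ψ)
            + Real.cos θ * (γ (r * Real.sin ψ) * Real.cos ψ)) := by
          congr 1; funext ψ; exact hsplit ψ
      _ = Real.sin θ * (∫ ψ in (0:ℝ)..(2*π), γ (r * Real.sin ψ) * Real.sin ψ)
            + Real.cos θ * ∫ ψ in (0:ℝ)..(2*π), γ (r * Real.sin ψ) * Real.cos ψ := by
          rw [intervalIntegral.integral_add (hiS.const_mul _) (hiC.const_mul _),
            intervalIntegral.integral_const_mul, intervalIntegral.integral_const_mul]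
      _ = _ := by rw [hz]; ring

theorem stmt_2 (γ : ℝ → ℝ) (hγ : Continuous γ) (x : EuclideanSpace ℝ (Fin 2)) (hx : x ≠ 0) :
    gbar γ x = rho γ ‖x‖ • ‖x‖⁻¹ • x := by
  set r := ‖x‖ with hrdef
  set a := x 0
  set b := x 1
  have hr : 0 < r := norm_pos_iff.mpr hx
  have hr2 : r ^ 2 = a ^ 2 + b ^ 2 := by
    rw [hrdef, EuclideanSpace.norm_eq, Real.sq_sqrt (by positivity)]
    simp [Fin.sum_univ_two, sq_abs]; rfl
  set z : ℂ := ⟨a, b⟩ with hzdef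
  have habs : ‖z‖ = r := by
    rw [Complex.norm_def, Complex.normSq_mk]
    rw [show a * a + b * b = r ^ 2 by rw [hr2]; ring]
    exact Real.sqrt_sq hr.le
  have hz : z ≠ 0 := by
    intro h; rw [h] at habs; simp at habs; exact hr.ne' habs.symm
  set θ := Complex.arg z with hθ
  have hc : Real.cos θ = a / r := by rw [hθ, Complex.cos_arg hz, habs]
  have hs : Real.sin θ = b / r := by rw [hθ, Complex.sin_arg, habs]
  have ha : a = r * Real.cos θ := by rw [hc]; field_simp
  have hb : b = r * Real.sin θ := by rw [hs]; field_simp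
  -- inner product simplification
  have hinner : ∀ φ : ℝ, (inner ℝ (vec2 (-Real.sin φ) (Real.cos φ)) x : ℝ)
      = r * Real.sin (θ - φ) := by
    intro φ
    have : (inner ℝ (vec2 (-Real.sin φ) (Real.cos φ)) x : ℝ) = -Real.sin φ * a + Real.cos φ * b := by
      show _ = -Real.sin φ * x.ofLp 0 + Real.cos φ * x.ofLp 1
      simp [vec2, PiLp.inner_apply, Fin.sum_univ_two, RCLike.inner_apply]
      ring
    rw [this, ha, hb, Real.sin_sub]; ring
  -- decompose integrand
  have hdecomp : ∀ φ : ℝ,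
      γ ((inner ℝ (vec2 (-Real.sin φ) (Real.cos φ)) x : ℝ)) • vec2 (-Real.sin φ) (Real.cos φ)
      = (γ (r * Real.sin (θ - φ)) * (-Real.sin φ)) • vec2 1 0
        + (γ (r * Real.sin (θ - φ)) * Real.cos φ) • vec2 0 1 := by
    intro φ
    rw [hinner φ]
    ext i
    fin_cases i <;> simp [vec2] <;> ring
  have hint : (∫ φ in (0:ℝ)..(2*π),
      γ ((inner ℝ (vec2 (-Real.sin φ) (Real.cos φ)) x : ℝ)) • vec2 (-Real.sin φ) (Real.cos φ))
      = (∫ φ in (0:ℝ)..(2*π), γ (r * Real.sin (θ - φ)) * (-Real.sin φ)) • vec2 1 0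
        + (∫ φ in (0:ℝ)..(2*π), γ (r * Real.sin (θ - φ)) * Real.cos φ) • vec2 0 1 := by
    rw [← intervalIntegral.integral_smul_const, ← intervalIntegral.integral_smul_const,
      ← intervalIntegral.integral_add (f := fun φ => (γ (r * Real.sin (θ - φ)) * (-Real.sin φ)) • vec2 1 0)
        (g := fun φ => (γ (r * Real.sin (θ - φ)) * Real.cos φ) • vec2 0 1)
        (((by fun_prop : Continuous fun φ => γ (r * Real.sin (θ - φ)) * (-Real.sin φ)).smul continuous_const : Continuous fun φ => (γ (r * Real.sin (θ - φ)) * (-Real.sin φ)) • vec2 1 0).intervalIntegrable _ _)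
        (((by fun_prop : Continuous fun φ => γ (r * Real.sin (θ - φ)) * Real.cos φ).smul continuous_const : Continuous fun φ => (γ (r * Real.sin (θ - φ)) * Real.cos φ) • vec2 0 1).intervalIntegrable _ _)]
    congr 1; funext φ; exact hdecomp φ
  obtain ⟨h1, h2⟩ := int_sin_cos γ hγ r θ
  set I := ∫ ψ in (0:ℝ)..(2*π), γ (r * Real.sin ψ) * Real.sin ψ with hI
  rw [gbar, hint, h1, h2, hc, hs]
  ext i
  fin_cases i <;>
    simp [rho, ← hI, vec2, PiLp.smul_apply, PiLp.add_apply, smul_eq_mul] <;>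
    field_simp <;> ring
end

section
/- Let ρ : ℝ≥0 → ℝ≥0 be continuous with ρ(0) = 0 and ρ(r) > 0 for r > 0. Consider the planar two-agent average system η₁' = ρ(|η₂ − η₁|)(η₂ − η₁)/|η₂ − η₁|, η₂' = 0 (with the right-hand side of η₁' defined as 0 when η₁ = η₂). Then along any solution on [0, ∞), the distance |η₂(t) − η₁(t)| is nonincreasing and tends to 0 as t → ∞. -/
open Real Filter

private lemma aux_anti_15 {F F' : ℝ → ℝ} (hF : ∀ t, 0 ≤ t → HasDerivAt F (F' t) t)
    (hF' : ∀ t, 0 ≤ t → F' t ≤ 0) : AntitoneOn F (Set.Ici 0) := by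
  apply antitoneOn_of_deriv_nonpos (convex_Ici 0)
  · intro t ht; exact (hF t ht).continuousAt.continuousWithinAt
  · intro t ht
    rw [interior_Ici] at ht
    exact (hF t ht.le).differentiableAt.differentiableWithinAt
  · intro t ht
    rw [interior_Ici] at ht
    rw [(hF t ht.le).deriv]
    exact hF' t ht.le

theorem stmt_15 (ρ : ℝ → ℝ) (hρc : ContinuousOn ρ (Set.Ici 0)) (hρ0 : ρ 0 = 0)
    (hρpos : ∀ r : ℝ, 0 < r → 0 < ρ r) (hρnn : ∀ r : ℝ, 0 ≤ r → 0 ≤ ρ r)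
    (η₁ η₂ : ℝ → EuclideanSpace ℝ (Fin 2))
    (h₁ : ∀ t, 0 ≤ t → HasDerivAt η₁
      (ρ ‖η₂ t - η₁ t‖ • ‖η₂ t - η₁ t‖⁻¹ • (η₂ t - η₁ t)) t)
    (h₂ : ∀ t, 0 ≤ t → HasDerivAt η₂ 0 t) :
    AntitoneOn (fun t => ‖η₂ t - η₁ t‖) (Set.Ici 0) ∧
    Tendsto (fun t => ‖η₂ t - η₁ t‖) atTop (nhds 0) := by
  set w : ℝ → EuclideanSpace ℝ (Fin 2) := fun t => η₂ t - η₁ t with hw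
  set d : ℝ → ℝ := fun t => ‖w t‖ with hd
  have hdnn : ∀ t, 0 ≤ d t := fun t => norm_nonneg _
  set f : ℝ → ℝ := fun t => (inner ℝ (w t) (w t) : ℝ) with hf
  have hfd : ∀ t, f t = d t ^ 2 := fun t => real_inner_self_eq_norm_sq _
  set F' : ℝ → ℝ := fun t => -(2 * ρ (d t) * d t) with hF'
  have hw' : ∀ t, 0 ≤ t → HasDerivAt w (-((ρ (d t) * (d t)⁻¹) • w t)) t := by
    intro t ht
    have h := (h₂ t ht).sub (h₁ t ht)
    simp only [smul_smul, zero_sub] at h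
    exact h
  have hfderiv : ∀ t, 0 ≤ t → HasDerivAt f (F' t) t := by
    intro t ht
    have h := HasDerivAt.inner ℝ (hw' t ht) (hw' t ht)
    refine h.congr_deriv (Eq.symm ?_)
    rw [inner_neg_right, inner_neg_left, real_inner_smul_right, real_inner_smul_left,
      real_inner_self_eq_norm_sq]
    rcases eq_or_lt_of_le (hdnn t) with h0 | h0
    · simp [F', ← h0, hρ0]
    · field_simp [F']
      ring
  have hfanti : AntitoneOn f (Set.Ici 0) := by
    apply aux_anti_15 hfderiv
    intro t ht
    have h1 : 0 ≤ 2 * ρ (d t) * d t :=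
      mul_nonneg (mul_nonneg (by norm_num) (hρnn _ (hdnn t))) (hdnn t)
    simp only [F']
    linarith
  have hdanti : AntitoneOn d (Set.Ici 0) := by
    intro s hs t ht hst
    have h := hfanti hs ht hst
    rw [hfd, hfd] at h
    nlinarith [hdnn s, hdnn t]
  set dd : ℝ → ℝ := fun t => d (max t 0) with hdd
  have hddanti : Antitone dd := fun s t hst =>
    hdanti (le_max_right s 0) (le_max_right t 0) (max_le_max hst le_rfl)
  have hbdd : BddBelow (Set.range dd) := ⟨0, by rintro x ⟨t, rfl⟩; exact hdnn _⟩
  have hlim : Tendsto dd atTop (nhds (⨅ t, dd t)) := tendsto_atTop_ciInf hddanti hbdd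
  set L := ⨅ t, dd t with hL
  have hLle : ∀ t, 0 ≤ t → L ≤ d t := by
    intro t ht
    have h := ciInf_le hbdd t
    simpa [dd, max_eq_left ht] using h
  have hL0 : 0 ≤ L := le_ciInf fun t => hdnn _
  have hdd_eq : dd =ᶠ[atTop] d := by
    filter_upwards [eventually_ge_atTop (0:ℝ)] with t ht
    simp [dd, max_eq_left ht]
  have hlimd : Tendsto d atTop (nhds L) := hlim.congr' hdd_eq
  have hLzero : L = 0 := by
    by_contra hne
    have hLpos : 0 < L := lt_of_le_of_ne hL0 (Ne.symm hne)
    have hLd0 : L ≤ d 0 := hLle 0 le_rfl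
    obtain ⟨x₀, hx₀, hx₀min⟩ := isCompact_Icc.exists_isMinOn (Set.nonempty_Icc.2 hLd0)
      (hρc.mono (fun x hx => le_trans hLpos.le hx.1))
    have hεpos : 0 < ρ x₀ := hρpos _ (lt_of_lt_of_le hLpos hx₀.1)
    set c := 2 * ρ x₀ * L with hc
    have hcpos : 0 < c := by positivity
    have hg : AntitoneOn (fun t => f t + c * t) (Set.Ici 0) := by
      apply aux_anti_15 (F' := fun t => F' t + c)
      · intro t ht
        have h := (hfderiv t ht).add ((hasDerivAt_id t).const_mul c)
        simp only [mul_one] at h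
        exact h
      · intro t ht
        have hdt1 : L ≤ d t := hLle t ht
        have hdt2 : d t ≤ d 0 := hdanti Set.self_mem_Ici ht ht
        have hρdt : ρ x₀ ≤ ρ (d t) := hx₀min ⟨hdt1, hdt2⟩
        simp only [F', hc]
        nlinarith
    have hf0 : 0 ≤ f 0 := by rw [hfd]; positivity
    set T := (f 0 + 1) / c with hT
    have hT0 : 0 ≤ T := by positivity
    have hgle : f T + c * T ≤ f 0 + c * 0 := hg Set.self_mem_Ici hT0 hT0
    have hcT : c * T = f 0 + 1 := by rw [hT]; field_simp
    have hfT : 0 ≤ f T := by rw [hfd]; positivity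
    rw [hcT] at hgle
    linarith
  refine ⟨hdanti, ?_⟩
  rw [hLzero] at hlimd
  exact hlimd
end

section
/- Let F : (ℝ²)^p → (ℝ²)^p be given by F(η)ᵢ = Σ_{j≠i} ρᵢⱼ(|ηⱼ − ηᵢ|)(ηⱼ − ηᵢ)/|ηⱼ − ηᵢ| with each ρᵢⱼ : ℝ≥0 → ℝ≥0 continuous, ρᵢⱼ(0) = 0. Then along any differentiable solution η(t) of η' = F(η), the quantity D(t) = max_{i,j} |ηᵢ(t) − ηⱼ(t)| is nonincreasing, i.e., the convex hull of the agents' states is shrinking: for all t ≥ s ≥ 0, max_{i,j}|ηᵢ(t) − ηⱼ(t)| ≤ max_{i,j}|ηᵢ(s) − ηⱼ(s)|. -/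
open Filter Set Topology

lemma maxNonincreasing {ι : Type*} [Fintype ι] [Nonempty ι]
    (f f' : ι → ℝ → ℝ) (hd : ∀ i x, HasDerivAt (f i) (f' i x) x)
    (hkey : ∀ x i, (∀ j, f j x ≤ f i x) → f' i x ≤ 0)
    {s t : ℝ} (hst : s ≤ t) :
    (Finset.univ.sup' Finset.univ_nonempty fun i => f i t) ≤
      Finset.univ.sup' Finset.univ_nonempty fun i => f i s := by
  set g : ℝ → ℝ := fun x => Finset.univ.sup' Finset.univ_nonempty fun i => f i x with hg
  have hgc : Continuous g :=
    continuous_iff_continuousAt.2 fun x =>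
      ContinuousAt.finset_sup'_apply Finset.univ_nonempty fun i _ => (hd i x).continuousAt
  have bound : ∀ x ∈ Ico s t, ∀ r, (0 : ℝ) < r → ∃ᶠ z in 𝓝[>] x, slope g x z < r := by
    intro x _ r hr
    have hev : ∀ j : ι, ∀ᶠ z in 𝓝[>] x, slope (f j) x z < r ∨ f j z < g x := by
      intro j
      rcases lt_or_eq_of_le (Finset.le_sup' (fun i => f i x) (Finset.mem_univ j)) with h | h
      · have h1 : ∀ᶠ z in 𝓝 x, f j z < g x :=
          (hd j x).continuousAt.eventually_lt continuousAt_const h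
        exact (h1.filter_mono nhdsWithin_le_nhds).mono fun z hz => Or.inr hz
      · have hact : ∀ k, f k x ≤ f j x := fun k =>
          h ▸ Finset.le_sup' (fun i => f i x) (Finset.mem_univ k)
        have hle : f' j x < r := lt_of_le_of_lt (hkey x j hact) hr
        have h2 : ∀ᶠ z in 𝓝[≠] x, slope (f j) x z < r :=
          (hasDerivAt_iff_tendsto_slope.1 (hd j x)).eventually (Filter.Tendsto.eventually_lt_const hle tendsto_id)
        exact (h2.filter_mono (nhdsWithin_mono x fun z hz => ne_of_gt hz)).mono fun z hz => Or.inl hz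
    have hall : ∀ᶠ z in 𝓝[>] x, ∀ j : ι, slope (f j) x z < r ∨ f j z < g x :=
      eventually_all.2 hev
    refine ((hall.and self_mem_nhdsWithin).mono ?_).frequently
    rintro z ⟨hz, hzx⟩
    have hzx' : (0 : ℝ) < z - x := sub_pos.2 hzx
    obtain ⟨k, -, hk⟩ := Finset.exists_mem_eq_sup' Finset.univ_nonempty fun i => f i z
    have hgz : g z = f k z := hk
    rcases hz k with h1 | h2
    · have hfk : f k x ≤ g x := Finset.le_sup' (fun i => f i x) (Finset.mem_univ k)
      calc slope g x z = (f k z - g x) / (z - x) := by rw [slope_def_field, hgz]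
        _ ≤ (f k z - f k x) / (z - x) := by
            exact (div_le_div_iff_of_pos_right hzx').2 (by linarith)
        _ = slope (f k) x z := (slope_def_field (f k) x z).symm
        _ < r := h1
    · calc slope g x z = (f k z - g x) / (z - x) := by rw [slope_def_field, hgz]
        _ < 0 := div_neg_of_neg_of_pos (sub_neg.2 h2) hzx'
        _ < r := hr
  have key := image_le_of_liminf_slope_right_le_deriv_boundary (f := g) (a := s) (b := t)
    hgc.continuousOn (B := fun _ => g s) (B' := fun _ => 0) le_rfl continuousOn_const
    (fun x _ => hasDerivWithinAt_const x _ (g s)) bound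
  exact key (right_mem_Icc.2 hst)


open Filter Set Topology in
theorem stmt_19 (p : ℕ) (ρm : Fin p → Fin p → ℝ → ℝ)
    (hc : ∀ i j, ContinuousOn (ρm i j) (Set.Ici 0))
    (hnn : ∀ i j (r : ℝ), 0 ≤ r → 0 ≤ ρm i j r)
    (h0 : ∀ i j, ρm i j 0 = 0)
    (η : Fin p → ℝ → EuclideanSpace ℝ (Fin 2))
    (hode : ∀ i t, HasDerivAt (η i)
      (∑ j ∈ Finset.univ.erase i,
        ρm i j ‖η j t - η i t‖ • ‖η j t - η i t‖⁻¹ • (η j t - η i t)) t) :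
    ∀ s t : ℝ, 0 ≤ s → s ≤ t →
      (⨆ ij : Fin p × Fin p, ‖η ij.1 t - η ij.2 t‖) ≤
        ⨆ ij : Fin p × Fin p, ‖η ij.1 s - η ij.2 s‖ := by
  intro s t _ hst
  rcases Nat.eq_zero_or_pos p with hp | hp
  · subst hp
    have : IsEmpty (Fin 0 × Fin 0) := by infer_instance
    simp [Real.iSup_of_isEmpty]
  · have : Nonempty (Fin p) := ⟨⟨0, hp⟩⟩
    set F : Fin p → ℝ → EuclideanSpace ℝ (Fin 2) := fun i x =>
      ∑ j ∈ Finset.univ.erase i,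
        ρm i j ‖η j x - η i x‖ • ‖η j x - η i x‖⁻¹ • (η j x - η i x) with hF
    set f : Fin p × Fin p → ℝ → ℝ := fun ij x => ‖η ij.1 x - η ij.2 x‖ ^ 2 with hf
    set f' : Fin p × Fin p → ℝ → ℝ := fun ij x =>
      2 * inner ℝ (η ij.1 x - η ij.2 x) (F ij.1 x - F ij.2 x) with hf'
    have hdu : ∀ (i j : Fin p) (x : ℝ),
        HasDerivAt (fun y => η i y - η j y) (F i x - F j x) x :=
      fun i j x => (hode i x).sub (hode j x)
    have hd : ∀ ij x, HasDerivAt (f ij) (f' ij x) x := by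
      rintro ⟨i, j⟩ x
      have h1 := (hdu i j x).inner ℝ (hdu i j x)
      have h2 : (fun y => (inner ℝ (η i y - η j y) (η i y - η j y) : ℝ)) = f (i, j) := by
        funext y
        exact real_inner_self_eq_norm_sq _
      rw [h2] at h1
      convert h1 using 1
      show 2 * inner ℝ (η i x - η j x) (F i x - F j x) = _
      rw [real_inner_comm (η i x - η j x) (F i x - F j x)]
      ring
      all_goals rfl
    have hkey : ∀ x ij, (∀ kl, f kl x ≤ f ij x) → f' ij x ≤ 0 := by
      rintro x ⟨i, j⟩ hmax
      set d : EuclideanSpace ℝ (Fin 2) := η i x - η j x with hdd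
      have hnorm : ∀ k l : Fin p, ‖η k x - η l x‖ ≤ ‖d‖ := by
        intro k l
        have := hmax (k, l)
        simp only [hf] at this
        exact (pow_le_pow_iff_left₀ (norm_nonneg _) (norm_nonneg _) two_ne_zero).1 this
      have hterm1 : (inner ℝ d (F i x) : ℝ) ≤ 0 := by
        rw [hF, inner_sum]
        apply Finset.sum_nonpos
        intro k hk
        rw [real_inner_smul_right, real_inner_smul_right]
        have hρ : 0 ≤ ρm i k ‖η k x - η i x‖ := hnn i k _ (norm_nonneg _)
        have hinv : (0:ℝ) ≤ ‖η k x - η i x‖⁻¹ := inv_nonneg.2 (norm_nonneg _)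
        have hip : (inner ℝ d (η k x - η i x) : ℝ) ≤ 0 := by
          have heq : η k x - η i x = (η k x - η j x) - d := by
            simp only [hdd]; abel
          rw [heq, inner_sub_right]
          have h3 : (inner ℝ d (η k x - η j x) : ℝ) ≤ ‖d‖ * ‖η k x - η j x‖ :=
            real_inner_le_norm _ _
          have h4 : (inner ℝ d d : ℝ) = ‖d‖ * ‖d‖ := real_inner_self_eq_norm_mul_norm d
          have h5 : ‖d‖ * ‖η k x - η j x‖ ≤ ‖d‖ * ‖d‖ :=
            mul_le_mul_of_nonneg_left (hnorm k j) (norm_nonneg _)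
          linarith
        exact mul_nonpos_of_nonneg_of_nonpos hρ (mul_nonpos_of_nonneg_of_nonpos hinv hip)
      have hterm2 : (0:ℝ) ≤ inner ℝ d (F j x) := by
        rw [hF, inner_sum]
        apply Finset.sum_nonneg
        intro k hk
        rw [real_inner_smul_right, real_inner_smul_right]
        have hρ : 0 ≤ ρm j k ‖η k x - η j x‖ := hnn j k _ (norm_nonneg _)
        have hinv : (0:ℝ) ≤ ‖η k x - η j x‖⁻¹ := inv_nonneg.2 (norm_nonneg _)
        have hip : (0:ℝ) ≤ inner ℝ d (η k x - η j x) := by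
          have heq : η k x - η j x = (η k x - η i x) + d := by
            simp only [hdd]; abel
          rw [heq, inner_add_right]
          have h3 : -(‖d‖ * ‖η k x - η i x‖) ≤ (inner ℝ d (η k x - η i x) : ℝ) := by
            have := abs_real_inner_le_norm d (η k x - η i x)
            linarith [neg_abs_le (inner ℝ d (η k x - η i x) : ℝ)]
          have h4 : (inner ℝ d d : ℝ) = ‖d‖ * ‖d‖ := real_inner_self_eq_norm_mul_norm d
          have h5 : ‖d‖ * ‖η k x - η i x‖ ≤ ‖d‖ * ‖d‖ :=
            mul_le_mul_of_nonneg_left (hnorm k i) (norm_nonneg _)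
          linarith
        positivity
      have : (inner ℝ d (F i x - F j x) : ℝ) ≤ 0 := by
        rw [inner_sub_right]; linarith
      simp only [hf']
      linarith
    have main := maxNonincreasing f f' hd hkey hst
    have hbdd : BddAbove (Set.range fun ij : Fin p × Fin p => ‖η ij.1 s - η ij.2 s‖) :=
      Set.Finite.bddAbove (Set.finite_range _)
    apply ciSup_le
    intro ij
    have h1 : f ij t ≤ Finset.univ.sup' Finset.univ_nonempty fun kl => f kl s :=
      le_trans (Finset.le_sup' (fun kl => f kl t) (Finset.mem_univ ij)) main
    obtain ⟨k, -, hk⟩ := Finset.exists_mem_eq_sup' Finset.univ_nonempty fun kl => f kl s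
    rw [hk] at h1
    have h2 : ‖η ij.1 t - η ij.2 t‖ ≤ ‖η k.1 s - η k.2 s‖ :=
      (pow_le_pow_iff_left₀ (norm_nonneg _) (norm_nonneg _) two_ne_zero).1 h1
    exact le_trans h2 (le_ciSup hbdd k)
end
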